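/- Let q ≥ 3 and n ≥ 3. Then |C_q(n)| = M_{q−2}(n−1) − Σ_{k=⌈n/2⌉}^{n−1} Σ_{i=0}^{n−1−k} M_{q−2}(i)·M_{q−2}(k−2)·M_{q−2}(n−1−i−k). -/

import Mathlib

/-- Value of a letter: 1 ↦ +1, 0 ↦ -1, other letters ↦ 0. -/
def mval (a : ℕ) : ℤ := if a = 1 then 1 else if a = 0 then -1 else 0

/-- Value-sum of a word. -/
def vsum (w : List ℕ) : ℤ := (w.map mval).sum

/-- A (q-2)-colored Motzkin word over the alphabet Z_q = {0,...,q-1}: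
all letters < q, every prefix has nonnegative value-sum, total value-sum 0. -/
def IsMotzkinWord (q : ℕ) (w : List ℕ) : Prop :=
  (∀ a ∈ w, a < q) ∧ (∀ u, u <+: w → 0 ≤ vsum u) ∧ vsum w = 0

/-- The set 𝓜_{q-2}(n) of (q-2)-colored Motzkin words of length n. -/
def MotzkinSet (q n : ℕ) : Set (List ℕ) := {w | w.length = n ∧ IsMotzkinWord q w}

/-- M_{q-2}(n), the number of (q-2)-colored Motzkin words of length n. -/
noncomputable def Mnum (q n : ℕ) : ℕ := (MotzkinSet q n).ncard

/-- The set Ê_{q-2}(n) of elevated (q-2)-colored Motzkin words of length n: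
words 1α0 with α ∈ 𝓜_{q-2}(n-2). -/
def ElevatedSet (q n : ℕ) : Set (List ℕ) :=
  {w | w.length = n ∧ ∃ α ∈ MotzkinSet q (n - 2), w = 1 :: (α ++ [0])}

/-- The set A_q(n). -/
def SetA (q n : ℕ) : Set (List ℕ) :=
  {w | ∃ i ≤ n / 2, ∃ α ∈ MotzkinSet q i, ∃ β ∈ ElevatedSet q (n - i), w = α ++ β} \
    {w | ∃ α ∈ ElevatedSet q (n / 2), ∃ β ∈ ElevatedSet q (n / 2), w = α ++ β}

/-- The set B_q(n). -/
def SetB (q n : ℕ) : Set (List ℕ) :=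
  {w | ∃ i ≤ n / 2 - 1, ∃ α ∈ MotzkinSet q i, ∃ β ∈ ElevatedSet q (n - i - 1),
    w = 1 :: (α ++ β)}

/-- The set C_q(n): words γ0 with γ a (q-2)-colored Motzkin word of length n-1
having no factor which is an elevated Motzkin word of length j ≥ ⌈n/2⌉. -/
def SetC (q n : ℕ) : Set (List ℕ) :=
  {w | ∃ γ ∈ MotzkinSet q (n - 1),
    (∀ j, (n + 1) / 2 ≤ j → ∀ β ∈ ElevatedSet q j, ¬ β <:+: γ) ∧ w = γ ++ [0]}

/-- The cross-bifix-free candidate set CBFS_q(n). -/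
def CBFS (q n : ℕ) : Set (List ℕ) := SetA q n ∪ SetB q n ∪ SetC q n

/-- A word is bifix-free if no nonempty proper prefix of it is also a suffix of it. -/
def BifixFree (w : List ℕ) : Prop :=
  ∀ u, u <+: w → u ≠ [] → u.length < w.length → ¬ u <:+ w

/-- BF_q(n): the set of bifix-free words of length n over Z_q. -/
def BF (q n : ℕ) : Set (List ℕ) := {w | w.length = n ∧ (∀ a ∈ w, a < q) ∧ BifixFree w}

/-- F_{k,q}(n): the number of words of length n over Z_q avoiding k consecutive 0's. -/
noncomputable def Fcount (k q n : ℕ) : ℕ :=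
  {w : List ℕ | w.length = n ∧ (∀ a ∈ w, a < q) ∧ ¬ List.replicate k 0 <:+: w}.ncard

/-- The set S_{k,q}(n) of Bajic--Stojanovic--Chee--Kiah type words: words s of length n
over Z_q with s₁ = ⋯ = s_k = 0, s_{k+1} ≠ 0, s_n ≠ 0, and such that the subword
s_{k+2} ⋯ s_{n-1} contains no k consecutive 0's. -/
def SetS (q k n : ℕ) : Set (List ℕ) :=
  {s | s.length = n ∧ (∀ a ∈ s, a < q) ∧ s.take k = List.replicate k 0 ∧
    s.getD k 0 ≠ 0 ∧ s.getLast? ≠ some 0 ∧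
    ¬ List.replicate k 0 <:+: (s.drop (k + 1)).take (n - k - 2)}

lemma vsum_nil : vsum [] = 0 := rfl
lemma vsum_cons (a : ℕ) (w : List ℕ) : vsum (a :: w) = mval a + vsum w := by
  simp [vsum]
lemma vsum_append (u v : List ℕ) : vsum (u ++ v) = vsum u + vsum v := by
  simp [vsum]

lemma mval_le_one (a : ℕ) : mval a ≤ 1 := by unfold mval; split <;> norm_num; split <;> norm_num
lemma neg_one_le_mval (a : ℕ) : -1 ≤ mval a := by unfold mval; split <;> norm_num; split <;> norm_num
lemma eq_one_of_one_le_mval {a : ℕ} (h : 1 ≤ mval a) : a = 1 := by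
  by_contra hne; unfold mval at h; rw [if_neg hne] at h; split at h <;> norm_num at h
lemma eq_zero_of_mval_le_neg {a : ℕ} (h : mval a ≤ -1) : a = 0 := by
  by_contra hne
  rcases eq_or_ne a 1 with h1 | h1 <;> simp [mval, hne, h1] at h

lemma vsum_take_append (u v : List ℕ) (p : ℕ) :
    vsum ((u ++ v).take p) = vsum (u.take p) + vsum (v.take (p - u.length)) := by
  rw [List.take_append, vsum_append]

lemma motzkin_iff (q n : ℕ) (w : List ℕ) :
    w ∈ MotzkinSet q n ↔ w.length = n ∧ (∀ a ∈ w, a < q) ∧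
      (∀ p, 0 ≤ vsum (w.take p)) ∧ vsum w = 0 := by
  constructor
  · rintro ⟨hl, hq, hpre, hz⟩
    exact ⟨hl, hq, fun p => hpre _ (List.take_prefix p w), hz⟩
  · rintro ⟨hl, hq, htake, hz⟩
    refine ⟨hl, hq, fun u hu => ?_, hz⟩
    rw [List.prefix_iff_eq_take.mp hu]; exact htake _

lemma mval_one : mval 1 = 1 := rfl
lemma mval_zero : mval 0 = -1 := rfl

lemma elevated_key {e β : List ℕ} {k : ℕ} (he : e = 1 :: (β ++ [0]))
    (hβl : β.length = k - 2) :
    ∀ p ≤ k - 2, vsum (e.take (p + 1)) = 1 + vsum (β.take p) := by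
  intro p hp
  rw [he, List.take_succ_cons, vsum_cons, mval_one, vsum_take_append, hβl,
    Nat.sub_eq_zero_of_le hp, List.take_zero, vsum_nil, add_zero]

lemma elevated_iff {q k : ℕ} (e : List ℕ) (hq : 3 ≤ q) :
    e ∈ ElevatedSet q k ↔ e.length = k ∧ 2 ≤ k ∧ (∀ a ∈ e, a < q) ∧ vsum e = 0 ∧
      ∀ p, 0 < p → p < k → 1 ≤ vsum (e.take p) := by
  constructor
  · rintro ⟨hl, β, hβ, he⟩
    rw [motzkin_iff] at hβ
    obtain ⟨hβl, hβq, hβtake, hβz⟩ := hβ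
    have hlen : e.length = β.length + 2 := by rw [he]; simp
    have hk2 : 2 ≤ k := by omega
    have hβl' : β.length = k - 2 := by omega
    refine ⟨hl, hk2, ?_, ?_, ?_⟩
    · intro a ha
      rw [he] at ha
      rcases List.mem_cons.mp ha with rfl | ha
      · omega
      rcases List.mem_append.mp ha with ha | ha
      · exact hβq a ha
      · simp at ha; omega
    · rw [he, vsum_cons, vsum_append, hβz, mval_one]
      simp [vsum, mval]
    · intro p hp hpk
      obtain ⟨p', rfl⟩ : ∃ p', p = p' + 1 := ⟨p - 1, by omega⟩
      rw [elevated_key he hβl' p' (by omega)]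
      have := hβtake p'
      omega
  · rintro ⟨hl, hk2, hlet, hz, hint⟩
    -- decompose e = a :: (β ++ [b])
    obtain ⟨a, u, rfl⟩ : ∃ a u, e = a :: u := by
      cases e with
      | nil => simp at hl; omega
      | cons a u => exact ⟨a, u, rfl⟩
    have hu : u ≠ [] := by
      intro h; rw [h] at hl; simp at hl; omega
    obtain ⟨β, b, rfl⟩ : ∃ β b, u = β ++ [b] := by
      refine ⟨u.dropLast, u.getLast hu, (List.dropLast_append_getLast hu).symm⟩
    have hβl : β.length = k - 2 := by simp at hl ⊢; omega
    -- a = 1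
    have ha : a = 1 := by
      have h1 := hint 1 one_pos (by omega)
      rw [List.take_succ_cons, List.take_zero, vsum_cons, vsum_nil, add_zero] at h1
      exact eq_one_of_one_le_mval h1
    -- b = 0
    have htk : vsum ((a :: (β ++ [b])).take (k - 1)) = mval a + vsum β := by
      obtain ⟨p', hp'⟩ : ∃ p', k - 1 = p' + 1 := ⟨k - 2, by omega⟩
      rw [hp', List.take_succ_cons, vsum_cons, vsum_take_append, hβl]
      have : p' = k - 2 := by omega
      rw [this, Nat.sub_self, List.take_zero, vsum_nil, add_zero,
        List.take_of_length_le (by omega)]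
    have hsum : mval a + (vsum β + mval b) = 0 := by
      rw [vsum_cons, vsum_append, vsum_cons, vsum_nil, add_zero] at hz; omega
    have h1 := hint (k - 1) (by omega) (by omega)
    rw [htk] at h1
    have hb : b = 0 := eq_zero_of_mval_le_neg (by omega)
    have ha1 : mval a = 1 := by rw [ha]; rfl
    have hvβ : vsum β = 0 := by rw [hb, mval_zero] at hsum; omega
    have he' : a :: (β ++ [b]) = 1 :: (β ++ [0]) := by rw [ha, hb]
    have hβ : β ∈ MotzkinSet q (k - 2) := by
      rw [motzkin_iff]
      refine ⟨hβl, fun x hx => hlet x (by simp [hx]), fun p => ?_, hvβ⟩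
      rcases le_or_gt (k - 2) p with hp | hp
      · rw [List.take_of_length_le (by omega)]; omega
      · have := hint (p + 1) (by omega) (by omega)
        rw [elevated_key he' hβl p (by omega)] at this
        omega
    exact ⟨hl, β, hβ, he'⟩

lemma motzkin_append {q a b : ℕ} {u v : List ℕ}
    (hu : u ∈ MotzkinSet q a) (hv : v ∈ MotzkinSet q b) :
    u ++ v ∈ MotzkinSet q (a + b) := by
  rw [motzkin_iff] at hu hv ⊢
  obtain ⟨hul, huq, hut, huz⟩ := hu
  obtain ⟨hvl, hvq, hvt, hvz⟩ := hv
  refine ⟨by simp [hul, hvl], ?_, ?_, by rw [vsum_append, huz, hvz, add_zero]⟩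
  · intro x hx; rcases List.mem_append.mp hx with h | h
    · exact huq x h
    · exact hvq x h
  · intro p
    rw [vsum_take_append]
    have := hut p; have := hvt (p - u.length); omega

lemma elevated_subset_motzkin {q k : ℕ} (hq : 3 ≤ q) :
    ElevatedSet q k ⊆ MotzkinSet q k := by
  intro e he
  rw [elevated_iff e hq] at he
  obtain ⟨hl, hk2, hlet, hz, hint⟩ := he
  rw [motzkin_iff]
  refine ⟨hl, hlet, fun p => ?_, hz⟩
  rcases Nat.eq_zero_or_pos p with rfl | hp
  · simp [vsum_nil]
  rcases le_or_gt k p with h | h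
  · rw [List.take_of_length_le (by omega)]; omega
  · have := hint p hp h; omega

/-- levels inside a decomposition -/
lemma decomp_levels {γ α e δ : List ℕ} (h : γ = α ++ e ++ δ) {i k : ℕ}
    (hα : α.length = i) (he : e.length = k) :
    ∀ p ≤ k, vsum (γ.take (i + p)) = vsum α + vsum (e.take p) := by
  intro p hp
  rw [h, List.append_assoc, vsum_take_append, vsum_take_append,
    List.take_of_length_le (by omega), hα]
  have h1 : i + p - i = p := by omega
  rw [h1, he, Nat.sub_eq_zero_of_le hp, List.take_zero, vsum_nil, add_zero]

/-- key arithmetic uniqueness lemma -/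
lemma keyArith (f : ℕ → ℤ) (m i₁ k₁ i₂ k₂ : ℕ)
    (h1 : i₁ + k₁ ≤ m) (h2 : i₂ + k₂ ≤ m) (hk : m < k₁ + k₂)
    (hk1 : 2 ≤ k₁) (hk2 : 2 ≤ k₂)
    (z1 : f i₁ = 0) (z1' : f (i₁ + k₁) = 0) (z2 : f i₂ = 0) (z2' : f (i₂ + k₂) = 0)
    (p1 : ∀ p, i₁ < p → p < i₁ + k₁ → 1 ≤ f p)
    (p2 : ∀ p, i₂ < p → p < i₂ + k₂ → 1 ≤ f p) :
    i₁ = i₂ ∧ k₁ = k₂ := by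
  have hi : i₁ = i₂ := by
    rcases lt_trichotomy i₁ i₂ with h | h | h
    · have := p1 i₂ h (by omega); omega
    · exact h
    · have := p2 i₁ h (by omega); omega
  subst hi
  constructor
  · rfl
  rcases lt_trichotomy k₁ k₂ with h | h | h
  · have := p2 (i₁ + k₁) (by omega) (by omega); omega
  · exact h
  · have := p1 (i₁ + k₂) (by omega) (by omega); omega

/-- The decomposition set: Motzkin ++ elevated(k) ++ Motzkin, total length m. -/
def Dset (q m k i : ℕ) : Set (List ℕ) :=
  {w | ∃ α ∈ MotzkinSet q i, ∃ e ∈ ElevatedSet q k, ∃ δ ∈ MotzkinSet q (m - i - k),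
    w = α ++ e ++ δ}

lemma Dset_subset_motzkin {q m k i : ℕ} (hq : 3 ≤ q) (hik : i + k ≤ m) :
    Dset q m k i ⊆ MotzkinSet q m := by
  rintro w ⟨α, hα, e, he, δ, hδ, rfl⟩
  have h := motzkin_append (motzkin_append hα (elevated_subset_motzkin hq he)) hδ
  rwa [show i + k + (m - i - k) = m from by omega] at h

lemma Dset_levels {q m k i : ℕ} (hq : 3 ≤ q) {γ : List ℕ} (hγ : γ ∈ Dset q m k i) :
    2 ≤ k ∧ vsum (γ.take i) = 0 ∧ vsum (γ.take (i + k)) = 0 ∧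
      ∀ p, i < p → p < i + k → 1 ≤ vsum (γ.take p) := by
  obtain ⟨α, hα, e, he, δ, hδ, rfl⟩ := hγ
  rw [elevated_iff e hq] at he
  obtain ⟨hel, hek2, heq, hez, heint⟩ := he
  rw [motzkin_iff] at hα
  obtain ⟨hαl, -, -, hαz⟩ := hα
  have hdl := decomp_levels (rfl : α ++ e ++ δ = α ++ e ++ δ) hαl hel
  refine ⟨hek2, ?_, ?_, ?_⟩
  · have := hdl 0 (Nat.zero_le k)
    simpa [hαz, vsum_nil] using this
  · have := hdl k le_rfl
    rw [List.take_of_length_le (le_of_eq hel)] at this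
    rw [this, hαz, hez]; ring
  · intro p h1 h2
    have h3 : i + (p - i) = p := by omega
    have := hdl (p - i) (by omega)
    rw [h3] at this
    rw [this, hαz]
    have := heint (p - i) (by omega) (by omega)
    omega

lemma Dset_unique {q m k₁ i₁ k₂ i₂ : ℕ} (hq : 3 ≤ q)
    (h1 : i₁ + k₁ ≤ m) (h2 : i₂ + k₂ ≤ m) (hk : m < k₁ + k₂) {γ : List ℕ}
    (m1 : γ ∈ Dset q m k₁ i₁) (m2 : γ ∈ Dset q m k₂ i₂) : i₁ = i₂ ∧ k₁ = k₂ := by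
  obtain ⟨hk1, z1, z1', p1⟩ := Dset_levels hq m1
  obtain ⟨hk2, z2, z2', p2⟩ := Dset_levels hq m2
  exact keyArith (fun p => vsum (γ.take p)) m i₁ k₁ i₂ k₂ h1 h2 hk hk1 hk2 z1 z1' z2 z2' p1 p2

lemma exists_decomp {q m t : ℕ} (hq : 3 ≤ q) {γ : List ℕ} (hγ : γ ∈ MotzkinSet q m)
    {j : ℕ} (htj : t ≤ j) {e : List ℕ} (he : e ∈ ElevatedSet q j) (hinf : e <:+: γ) :
    ∃ k, t ≤ k ∧ k ≤ m ∧ ∃ i, i + k ≤ m ∧ γ ∈ Dset q m k i := by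
  classical
  obtain ⟨s, tl, hstl⟩ := hinf
  rw [elevated_iff e hq] at he
  obtain ⟨hel, hej2, heq, hez, heint⟩ := he
  rw [motzkin_iff] at hγ
  obtain ⟨hγl, hγq, hγt, hγz⟩ := hγ
  set i := s.length with hi
  have hijm : i + j ≤ m := by
    have := congrArg List.length hstl
    simp [hel] at this; omega
  have hdl := decomp_levels hstl.symm rfl hel
  have hfs : vsum (γ.take i) = vsum s := by
    have h0 := hdl 0 (Nat.zero_le j)
    simpa [vsum_nil] using h0
  -- i' : last zero level before i
  set P : ℕ → Prop := fun p => vsum (γ.take p) = 0 with hP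
  have hP0 : P 0 := by simp [hP, vsum_nil]
  set i' := Nat.findGreatest P i with hi'
  have hPi' : vsum (γ.take i') = 0 := Nat.findGreatest_spec (Nat.zero_le i) hP0
  have hi'le : i' ≤ i := Nat.findGreatest_le i
  -- j' : first zero level after i + j
  set Q : ℕ → Prop := fun d => vsum (γ.take (i + j + d)) = 0 with hQ
  have hQw : Q (m - (i + j)) := by
    have h : i + j + (m - (i + j)) = m := by omega
    simp only [hQ, h]
    rw [List.take_of_length_le (le_of_eq hγl), hγz]
  have hQne : ∃ d, Q d := ⟨_, hQw⟩
  set j' := i + j + Nat.find hQne with hj'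
  have hQj' : vsum (γ.take j') = 0 := Nat.find_spec hQne
  have hj'le : j' ≤ m := by
    have := Nat.find_min' hQne hQw; omega
  -- interior positivity on (i', j')
  have hintr : ∀ r, i' < r → r < j' → 1 ≤ vsum (γ.take r) := by
    intro r hr1 hr2
    rcases le_or_gt r i with hri | hri
    · have hnz : ¬ P r := Nat.findGreatest_is_greatest hr1 hri
      simp only [hP] at hnz
      have := hγt r
      omega
    rcases lt_or_ge r (i + j) with hrij | hrij
    · have h3 : i + (r - i) = r := by omega
      have h4 := hdl (r - i) (by omega)
      rw [h3] at h4
      have h5 := heint (r - i) (by omega) (by omega)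
      have h6 := hγt i
      rw [hfs] at h6
      omega
    · have hd : r - (i + j) < Nat.find hQne := by omega
      have hnz := Nat.find_min hQne hd
      simp only [hQ] at hnz
      rw [show i + j + (r - (i + j)) = r from by omega] at hnz
      have := hγt r
      omega
  -- assemble decomposition
  set k := j' - i' with hk
  have hi'j' : i' + k = j' := by omega
  have hjk : j ≤ k := by omega
  refine ⟨k, by omega, by omega, i', by omega, ?_⟩
  set α := γ.take i' with hα
  set e' := (γ.drop i').take k with he'
  set δ := γ.drop j' with hδ
  have htadd : γ.take j' = α ++ e' := by
    rw [← hi'j', List.take_add]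
  have hsplit : γ = α ++ e' ++ δ := by
    conv_lhs => rw [← List.take_append_drop j' γ]
    rw [htadd]
  have hαmem : α ∈ MotzkinSet q i' := by
    rw [motzkin_iff]
    refine ⟨by simp [hα, hγl]; omega, fun x hx => hγq x (List.take_subset _ _ hx), ?_, hPi'⟩
    intro p
    rw [hα, List.take_take]
    exact hγt _
  have he'mem : e' ∈ ElevatedSet q k := by
    rw [elevated_iff e' hq]
    refine ⟨by simp [he', hγl]; omega, by omega,
      fun x hx => hγq x (List.drop_subset _ _ (List.take_subset _ _ hx)), ?_, ?_⟩
    · have h9 : vsum (γ.take j') = vsum α + vsum e' := by rw [htadd, vsum_append]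
      rw [hPi'] at h9
      omega
    · intro p hp hpk
      have h5 : γ.take (i' + p) = α ++ (γ.drop i').take p := List.take_add
      have h6 : e'.take p = (γ.drop i').take p := by
        rw [he', List.take_take, min_eq_left (le_of_lt hpk)]
      have h7 := hintr (i' + p) (by omega) (by omega)
      have h8 : vsum (γ.take (i' + p)) = vsum α + vsum (e'.take p) := by
        rw [h5, vsum_append, h6]
      rw [show vsum α = 0 from hPi'] at h8
      omega
  have hδmem : δ ∈ MotzkinSet q (m - i' - k) := by
    rw [motzkin_iff]
    refine ⟨by simp [hδ, hγl]; omega, fun x hx => hγq x (List.drop_subset _ _ hx), ?_, ?_⟩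
    · intro p
      have h5 : γ.take (j' + p) = γ.take j' ++ δ.take p := List.take_add
      have h6 : vsum (γ.take (j' + p)) = vsum (γ.take j') + vsum (δ.take p) := by
        rw [h5, vsum_append]
      have := hγt (j' + p)
      omega
    · have h5 := congrArg vsum (List.take_append_drop j' γ)
      rw [vsum_append] at h5
      rw [hδ]
      omega
  exact ⟨α, hαmem, e', he'mem, δ, hδmem, hsplit⟩

/-- finiteness of bounded-alphabet fixed-length word sets -/
lemma finite_words (q : ℕ) : ∀ n, {w : List ℕ | w.length = n ∧ ∀ a ∈ w, a < q}.Finite := by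
  intro n
  induction n with
  | zero =>
    apply Set.Finite.subset (Set.finite_singleton ([] : List ℕ))
    rintro w ⟨hl, -⟩
    simp [List.length_eq_zero_iff.mp hl]
  | succ n ih =>
    have : {w : List ℕ | w.length = n + 1 ∧ ∀ a ∈ w, a < q} ⊆
        ⋃ a ∈ Finset.range q, (fun w => a :: w) ''
          {w : List ℕ | w.length = n ∧ ∀ a ∈ w, a < q} := by
      rintro w ⟨hl, hq⟩
      cases w with
      | nil => simp at hl
      | cons a u =>
        simp only [Set.mem_iUnion]
        refine ⟨a, by simpa using hq a (by simp), u, ⟨by simpa using hl,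
          fun x hx => hq x (by simp [hx])⟩, rfl⟩
    exact Set.Finite.subset (Set.Finite.biUnion (Finset.range q).finite_toSet
      (fun a _ => ih.image _)) this

lemma motzkin_finite (q n : ℕ) : (MotzkinSet q n).Finite :=
  Set.Finite.subset (finite_words q n) (fun w hw => ⟨hw.1, hw.2.1⟩)

lemma elevated_finite (q n : ℕ) (hq : 3 ≤ q) : (ElevatedSet q n).Finite := by
  apply Set.Finite.subset (finite_words q n)
  intro w hw
  rw [elevated_iff w hq] at hw
  exact ⟨hw.1, hw.2.2.1⟩

lemma ncard_prod {A B : Type*} (s : Set A) (t : Set B) (hs : s.Finite) (ht : t.Finite) :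
    (s ×ˢ t).ncard = s.ncard * t.ncard := by
  rw [Set.ncard_eq_toFinset_card _ hs, Set.ncard_eq_toFinset_card _ ht,
    Set.ncard_eq_toFinset_card _ (hs.prod ht), ← Set.Finite.toFinset_prod,
    Finset.card_product]

/-- ncard of a pairwise-disjoint biUnion over a Finset -/
lemma ncard_biUnion_finset {ι α : Type*} (s : Finset ι) (D : ι → Set α)
    (hfin : ∀ i ∈ s, (D i).Finite)
    (hdisj : ∀ i ∈ s, ∀ j ∈ s, i ≠ j → Disjoint (D i) (D j)) :
    (⋃ i ∈ s, D i).ncard = ∑ i ∈ s, (D i).ncard := by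
  classical
  induction s using Finset.induction_on with
  | empty => simp
  | @insert a s ha ih =>
    rw [Finset.set_biUnion_insert, Finset.sum_insert ha,
      Set.ncard_union_eq ?_ (hfin a (by simp)) ?_, ih (fun i hi => hfin i (by simp [hi]))
        (fun i hi j hj hij => hdisj i (by simp [hi]) j (by simp [hj]) hij)]
    · rw [Set.disjoint_left]
      intro x hx hx'
      simp only [Set.mem_iUnion] at hx'
      obtain ⟨i, hi, hxi⟩ := hx'
      exact Set.disjoint_left.mp
        (hdisj a (by simp) i (Finset.mem_insert_of_mem (by simpa using hi))
          (fun h => ha (by simpa using h ▸ hi))) hx hxi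
    · exact Set.Finite.biUnion s.finite_toSet
        (fun i hi => hfin i (Finset.mem_insert_of_mem (by simpa using hi)))

lemma Dset_image {q m k i : ℕ} (hk2 : 2 ≤ k) :
    Dset q m k i = (fun x : List ℕ × List ℕ × List ℕ =>
        x.1 ++ (1 :: (x.2.1 ++ [0])) ++ x.2.2) ''
      (MotzkinSet q i ×ˢ MotzkinSet q (k - 2) ×ˢ MotzkinSet q (m - i - k)) := by
  ext w
  constructor
  · rintro ⟨α, hα, e, ⟨hel, β, hβ, rfl⟩, δ, hδ, rfl⟩
    exact ⟨(α, β, δ), ⟨hα, hβ, hδ⟩, rfl⟩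
  · rintro ⟨⟨α, β, δ⟩, ⟨hα, hβ, hδ⟩, rfl⟩
    have hβl : β.length = k - 2 := hβ.1
    refine ⟨α, hα, _, ⟨?_, β, hβ, rfl⟩, δ, hδ, rfl⟩
    simp [hβl]; omega

lemma Dset_ncard {q m k i : ℕ} (hq : 3 ≤ q) (hk2 : 2 ≤ k) :
    (Dset q m k i).ncard = Mnum q i * Mnum q (k - 2) * Mnum q (m - i - k) := by
  rw [Dset_image hk2]
  rw [Set.ncard_image_of_injOn ?_]
  · rw [ncard_prod _ _ (motzkin_finite q i)
      ((motzkin_finite q (k-2)).prod (motzkin_finite q (m - i - k))),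
      ncard_prod _ _ (motzkin_finite q (k-2)) (motzkin_finite q (m - i - k)),
      Mnum, Mnum, Mnum, mul_assoc]
  · rintro ⟨α₁, β₁, δ₁⟩ ⟨hα₁, hβ₁, hδ₁⟩ ⟨α₂, β₂, δ₂⟩ ⟨hα₂, hβ₂, hδ₂⟩ heq
    simp only at heq
    rw [List.append_assoc, List.append_assoc] at heq
    obtain ⟨hA, heq2⟩ := List.append_inj heq (hα₁.1.trans hα₂.1.symm)
    rw [List.cons_append, List.cons_append] at heq2
    injection heq2 with _ heq3
    obtain ⟨hB, hC⟩ := List.append_inj heq3 (by simp [hβ₁.1, hβ₂.1])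
    have hB' := (List.append_left_inj [0]).mp hB
    simp only [Prod.mk.injEq]
    exact ⟨hA, hB', hC⟩

lemma Dset_finite {q m k i : ℕ} (hq : 3 ≤ q) (hik : i + k ≤ m) : (Dset q m k i).Finite :=
  (motzkin_finite q m).subset (Dset_subset_motzkin hq hik)

/-- |C_q(n)| = M_{q-2}(n-1) −
Σ_{k=⌈n/2⌉}^{n-1} Σ_{i=0}^{n-1-k} M_{q-2}(i)·M_{q-2}(k-2)·M_{q-2}(n-1-i-k). -/
theorem setC_card (q n : ℕ) (hq : 3 ≤ q) (hn : 3 ≤ n) :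
    ((SetC q n).ncard : ℤ) = (Mnum q (n - 1) : ℤ) -
      ∑ k ∈ Finset.Icc ((n + 1) / 2) (n - 1), ∑ i ∈ Finset.range (n - k),
        (Mnum q i : ℤ) * (Mnum q (k - 2) : ℤ) * (Mnum q (n - 1 - i - k) : ℤ) := by
  classical
  set m := n - 1 with hm
  set t := (n + 1) / 2 with ht
  have ht2 : 2 ≤ t := by omega
  have htm : m < 2 * t := by omega
  -- index set
  set S : Finset ((_ : ℕ) × ℕ) := (Finset.Icc t m).sigma (fun k => Finset.range (n - k))
    with hS
  have hSmem : ∀ k i : ℕ, (⟨k, i⟩ : (_ : ℕ) × ℕ) ∈ S ↔ (t ≤ k ∧ k ≤ m ∧ i + k ≤ m) := by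
    intro k i
    simp only [hS, Finset.mem_sigma, Finset.mem_Icc, Finset.mem_range]
    omega
  set D : ((_ : ℕ) × ℕ) → Set (List ℕ) := fun p => Dset q m p.1 p.2 with hD
  set Bad := ⋃ p ∈ S, D p with hBad
  have hBadmem : ∀ γ, γ ∈ Bad ↔
      ∃ k, t ≤ k ∧ k ≤ m ∧ ∃ i, i + k ≤ m ∧ γ ∈ Dset q m k i := by
    intro γ
    rw [hBad, Set.mem_iUnion₂]
    constructor
    · rintro ⟨⟨k, i⟩, hp, hγ⟩
      rw [hSmem k i] at hp
      exact ⟨k, hp.1, hp.2.1, i, by omega, hγ⟩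
    · rintro ⟨k, h1, h2, i, h3, hγ⟩
      exact ⟨⟨k, i⟩, (hSmem k i).mpr ⟨h1, h2, by omega⟩, hγ⟩
  have hBadsub : Bad ⊆ MotzkinSet q m := by
    intro γ hγ
    obtain ⟨k, h1, h2, i, h3, hγ⟩ := (hBadmem γ).mp hγ
    exact Dset_subset_motzkin hq (by omega) hγ
  -- SetC as an image
  have hSetC : SetC q n = (fun γ => γ ++ [0]) '' (MotzkinSet q m \ Bad) := by
    ext w
    constructor
    · rintro ⟨γ, hγ, hno, rfl⟩
      refine ⟨γ, ⟨hγ, fun hbad => ?_⟩, rfl⟩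
      obtain ⟨k, h1, h2, i, h3, α, hα, e, he, δ, hδ, heq⟩ := (hBadmem γ).mp hbad
      exact hno k h1 e he ⟨α, δ, heq.symm⟩
    · rintro ⟨γ, ⟨hγ, hnb⟩, rfl⟩
      refine ⟨γ, hγ, fun j hj β hβ hinf => hnb ?_, rfl⟩
      exact (hBadmem γ).mpr (exists_decomp hq hγ hj hβ hinf)
  -- cardinalities
  have hMfin := motzkin_finite q m
  have hBadfin := hMfin.subset hBadsub
  have himg : (SetC q n).ncard = (MotzkinSet q m \ Bad).ncard := by
    rw [hSetC]
    exact Set.ncard_image_of_injective _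
      (fun a b h => (List.append_left_inj [0]).mp h)
  have hdisj : ∀ p ∈ S, ∀ p' ∈ S, p ≠ p' → Disjoint (D p) (D p') := by
    rintro ⟨k, i⟩ hp ⟨k', i'⟩ hp' hne
    rw [hSmem k i] at hp
    rw [hSmem k' i'] at hp'
    rw [Set.disjoint_left]
    intro γ h1 h2
    have h1' : γ ∈ Dset q m k i := h1
    have h2' : γ ∈ Dset q m k' i' := h2
    obtain ⟨hi, hk⟩ := Dset_unique hq (by omega) (by omega) (by omega) h1' h2'
    exact hne (by subst hi; subst hk; rfl)
  have hBadcard : Bad.ncard = ∑ p ∈ S, (D p).ncard := by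
    rw [hBad]
    refine ncard_biUnion_finset S D (fun p hp => ?_) hdisj
    rcases p with ⟨k, i⟩
    have := (hSmem k i).mp hp
    exact Dset_finite (q := q) (m := m) (k := k) (i := i) hq (by omega)
  have hsum : (Bad.ncard : ℤ) = ∑ k ∈ Finset.Icc t m, ∑ i ∈ Finset.range (n - k),
      (Mnum q i : ℤ) * (Mnum q (k - 2) : ℤ) * (Mnum q (m - i - k) : ℤ) := by
    rw [hBadcard, Finset.sum_sigma]
    push_cast
    refine Finset.sum_congr rfl fun k hk => Finset.sum_congr rfl fun i hi => ?_
    rw [Finset.mem_Icc] at hk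
    rw [hD]
    dsimp only
    rw [Dset_ncard hq (by omega)]
    push_cast
    ring
  rw [himg, Set.cast_ncard_sdiff hBadsub hMfin, hsum]
  rfl
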